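/- Let p be an odd prime, let n be a positive integer divisible by p, and let S be a subset of Z_n with 0 ∉ S, S = −S, |S| = p − 1, and S generating Z_n. Then for every integer j ≥ 2 such that p^j divides n, the p^j-th cyclotomic polynomial λ_{p^j}(x) does not divide the polynomial f_{S∪{0}}(x) in Z[x]. -/

import Mathlib

open Polynomial

/-- The circulant graph `Cay(Z_n, S)`: vertices are `ZMod n`, and `u, v` are adjacent
iff `v - u ∈ S` (here symmetrised; when `S = -S` this agrees with the usual definition). -/
def circulantGraph (n : ℕ) (S : Finset (ZMod n)) : SimpleGraph (ZMod n) :=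
  SimpleGraph.fromRel (fun u v => v - u ∈ S)

/-- `C` is a perfect code in `G`: an independent set such that every vertex outside `C`
is adjacent to exactly one vertex of `C`. -/
def IsPerfectCode {V : Type*} (G : SimpleGraph V) (C : Set V) : Prop :=
  (∀ u ∈ C, ∀ v ∈ C, ¬ G.Adj u v) ∧ ∀ v, v ∉ C → ∃! c, c ∈ C ∧ G.Adj v c

/-- `C` is a total perfect code in `G`: every vertex is adjacent to exactly one vertex of `C`. -/
def IsTotalPerfectCode {V : Type*} (G : SimpleGraph V) (C : Set V) : Prop :=
  ∀ v, ∃! c, c ∈ C ∧ G.Adj v c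

/-- **Claim 2** in the proof of Theorem 1.1: for an odd prime `p`, `p ∣ n`, and `S` generating
`Z_n` with `|S| = p - 1`, for every `j ≥ 2` with `p^j ∣ n`, the cyclotomic polynomial
`λ_{p^j}(x)` does not divide `f_{S∪{0}}(x)`. -/
theorem cyclotomic_primePow_not_dvd_fS
    (p n : ℕ) (hp : p.Prime) (hodd : Odd p) (hn : 0 < n) (hpn : p ∣ n)
    (S : Finset (ZMod n)) (h0S : (0 : ZMod n) ∉ S) (hSneg : ∀ s ∈ S, -s ∈ S)
    (hcard : S.card = p - 1)
    (hgen : AddSubgroup.closure (S : Set (ZMod n)) = ⊤) :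
    ∀ j : ℕ, 2 ≤ j → p ^ j ∣ n →
      ¬ (Polynomial.cyclotomic (p ^ j) ℤ ∣ ∑ s ∈ insert (0 : ZMod n) S, (X : ℤ[X]) ^ s.val) := by
  haveI : NeZero n := ⟨hn.ne'⟩
  haveI : Fact p.Prime := ⟨hp⟩
  haveI : Fact (1 < p) := ⟨hp.one_lt⟩
  intro j hj hpj hdvd
  obtain ⟨j', rfl⟩ : ∃ j', j = j' + 1 := ⟨j - 1, by omega⟩
  have hj' : 1 ≤ j' := by omega
  set T : Finset (ZMod n) := insert 0 S with hT
  set N := p ^ (j' + 1) with hN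
  set q := p ^ j' with hq
  have hqp : q * p = N := by rw [hq, hN, ← pow_succ]
  have hppos : 0 < p := hp.pos
  have hqpos : 0 < q := pow_pos hppos _
  have hNpos : 0 < N := pow_pos hppos _
  have hqN : q < N := by
    calc q = q * 1 := (mul_one q).symm
    _ < q * p := by exact (Nat.mul_lt_mul_left hqpos).mpr hp.one_lt
    _ = N := hqp
  set f : ℤ[X] := ∑ s ∈ T, (X : ℤ[X]) ^ s.val with hf
  set g : ℤ[X] := ∑ s ∈ T, (X : ℤ[X]) ^ (s.val % N) with hg
  have hTcard : T.card = p := by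
    rw [hT, Finset.card_insert_of_notMem h0S, hcard]; omega
  -- cyclotomic divides g
  have hNdvd : (X : ℤ[X]) ^ N - 1 ∣ f - g := by
    rw [hf, hg, ← Finset.sum_sub_distrib]
    refine Finset.dvd_sum fun s _ => ?_
    have hexp : (X : ℤ[X]) ^ s.val - X ^ (s.val % N)
        = X ^ (s.val % N) * (((X : ℤ[X]) ^ N) ^ (s.val / N) - 1) := by
      rw [mul_sub, mul_one, ← pow_mul, ← pow_add]
      congr 2
      simp [Nat.mod_add_div]
    rw [hexp]
    exact dvd_mul_of_dvd_right
      (by simpa using sub_dvd_pow_sub_pow ((X : ℤ[X]) ^ N) 1 (s.val / N)) _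
  have hΦdvdg : cyclotomic N ℤ ∣ g := by
    have h1 : cyclotomic N ℤ ∣ f - g :=
      (cyclotomic.dvd_X_pow_sub_one N ℤ).trans hNdvd
    have := dvd_sub hdvd h1
    simpa using this
  obtain ⟨w, hw⟩ := hΦdvdg
  -- basic facts about g
  have hgeval : g.eval 1 = (p : ℤ) := by
    rw [hg, eval_finset_sum]
    simp [hTcard]
  have hgne : g ≠ 0 := by
    intro h
    rw [h, eval_zero] at hgeval
    exact (Nat.cast_ne_zero.mpr hp.pos.ne') hgeval.symm
  have hwne : w ≠ 0 := by
    rintro rfl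
    rw [mul_zero] at hw
    exact hgne hw
  have hgdeg : g.natDegree ≤ N - 1 := by
    rw [hg]
    refine natDegree_sum_le_of_forall_le _ _ fun s _ => ?_
    rw [natDegree_X_pow]
    have := Nat.mod_lt s.val hNpos
    omega
  have hΦdeg : (cyclotomic N ℤ).natDegree = N - q := by
    rw [natDegree_cyclotomic, hN, Nat.totient_prime_pow hp (by omega)]
    have h1 : j' + 1 - 1 = j' := by omega
    rw [h1, ← hq, Nat.mul_sub, mul_one, hqp]
  have hwdeg : w.natDegree < q := by
    have hmul : g.natDegree = (cyclotomic N ℤ).natDegree + w.natDegree := by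
      rw [hw, Polynomial.natDegree_mul (cyclotomic.monic N ℤ).ne_zero hwne]
    rw [hmul, hΦdeg] at hgdeg
    omega
  -- coefficients of g
  have hcoeffg : ∀ m : ℕ, g.coeff m = ∑ s ∈ T, if m = s.val % N then 1 else 0 := by
    intro m
    rw [hg, finset_sum_coeff]
    exact Finset.sum_congr rfl fun s _ => coeff_X_pow _ _
  have hcnonneg : ∀ m : ℕ, 0 ≤ g.coeff m := by
    intro m
    rw [hcoeffg]
    exact Finset.sum_nonneg fun s _ => by split <;> norm_num
  have hcpos : ∀ s ∈ T, 1 ≤ g.coeff (s.val % N) := by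
    intro s hs
    rw [hcoeffg]
    have h1 := Finset.single_le_sum
      (f := fun t : ZMod n => if (s.val % N) = t.val % N then (1 : ℤ) else 0)
      (fun i _ => by split <;> norm_num) hs
    simpa using h1
  -- cyclotomic as geometric sum
  have hΦform : cyclotomic N ℤ = ∑ i ∈ Finset.range p, (X : ℤ[X]) ^ (q * i) := by
    rw [hN, cyclotomic_prime_pow_eq_geom_sum hp]
    exact Finset.sum_congr rfl fun i _ => by rw [← pow_mul, hq]
  -- key coefficient identity
  have hkey : ∀ r k : ℕ, r < q → k < p → g.coeff (r + k * q) = w.coeff r := by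
    intro r k hr hk
    rw [hw, hΦform, Finset.sum_mul, finset_sum_coeff]
    rw [Finset.sum_eq_single k]
    · rw [mul_comm ((X : ℤ[X]) ^ (q * k)) w, coeff_mul_X_pow',
        if_pos (by rw [mul_comm q k]; exact Nat.le_add_left _ _)]
      congr 1
      rw [mul_comm q k]
      omega
    · intro i _ hik
      rw [mul_comm ((X : ℤ[X]) ^ (q * i)) w, coeff_mul_X_pow']
      split
      case isTrue h =>
        apply coeff_eq_zero_of_natDegree_lt
        have hik' : i < k := by
          rcases lt_trichotomy i k with h' | h' | h'
          · exact h'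
          · exact absurd h' hik
          · exfalso
            have : q * k + q ≤ q * i := by
              calc q * k + q = q * (k + 1) := by ring
              _ ≤ q * i := Nat.mul_le_mul_left q h'
            have : r + k * q < q * i := by
              have := Nat.mul_comm q k
              omega
            omega
        have h2 : q * i + q ≤ r + k * q := by
          have : q * (i + 1) ≤ q * k := Nat.mul_le_mul_left q hik'
          have := Nat.mul_comm q k
          have := Nat.mul_add q i 1
          omega
        have h3 : q ≤ r + k * q - q * i := by omega
        omega
      case isFalse h => rfl
    · intro hk'
      exact absurd (Finset.mem_range.2 hk) hk'
  -- sum of coefficients of w is 1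
  have hweval : w.eval 1 = 1 := by
    have h1 : (cyclotomic N ℤ).eval 1 * w.eval 1 = (p : ℤ) := by
      rw [← eval_mul, ← hw, hgeval]
    rw [hN, eval_one_cyclotomic_prime_pow] at h1
    have hpne : ((p : ℕ) : ℤ) ≠ 0 := by exact_mod_cast hp.pos.ne'
    exact mul_left_cancel₀ hpne (by rw [h1, mul_one])
  have hwsum : ∑ r ∈ Finset.range q, w.coeff r = 1 := by
    have := eval_eq_sum_range' hwdeg (1 : ℤ)
    simpa [hweval] using this.symm
  have hwnonneg : ∀ r < q, 0 ≤ w.coeff r := by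
    intro r hr
    rw [← hkey r 0 hr hppos]
    simpa using hcnonneg r
  have hw0 : 1 ≤ w.coeff 0 := by
    have h0T : (0 : ZMod n) ∈ T := Finset.mem_insert_self _ _
    have := hcpos 0 h0T
    rw [ZMod.val_zero, Nat.zero_mod] at this
    rw [← hkey 0 0 hqpos hppos]
    simpa using this
  have hwzero : ∀ r < q, r ≠ 0 → w.coeff r = 0 := by
    intro r hr hr0
    have h0mem : 0 ∈ Finset.range q := Finset.mem_range.2 hqpos
    have hsplit : w.coeff 0 + ∑ x ∈ (Finset.range q).erase 0, w.coeff x = 1 := by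
      rw [Finset.add_sum_erase _ _ h0mem]; exact hwsum
    have hrmem : r ∈ (Finset.range q).erase 0 :=
      Finset.mem_erase.2 ⟨hr0, Finset.mem_range.2 hr⟩
    have h2 : w.coeff r ≤ ∑ x ∈ (Finset.range q).erase 0, w.coeff x :=
      Finset.single_le_sum
        (fun i hi => hwnonneg i (Finset.mem_range.1 (Finset.mem_erase.1 hi).2)) hrmem
    have h3 := hwnonneg r hr
    linarith
  -- every element of S has value divisible by p
  have hpdvd : ∀ s ∈ S, p ∣ s.val := by
    intro s hs
    set m := s.val % N with hm
    have hmN : m < N := Nat.mod_lt _ hNpos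
    have hrq : m % q < q := Nat.mod_lt _ hqpos
    have hkp : m / q < p := by
      rw [Nat.div_lt_iff_lt_mul hqpos]
      rw [mul_comm]
      omega
    have h1 : 1 ≤ g.coeff m := hcpos s (Finset.mem_insert_of_mem hs)
    have h2 : g.coeff (m % q + (m / q) * q) = w.coeff (m % q) := hkey _ _ hrq hkp
    rw [Nat.mod_add_div'] at h2
    have h3 : m % q = 0 := by
      by_contra h
      have := hwzero (m % q) hrq h
      rw [h2, this] at h1
      omega
    have hqm : q ∣ m := Nat.dvd_of_mod_eq_zero h3
    have hqN' : q ∣ N := ⟨p, hqp.symm⟩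
    have hqval : q ∣ s.val := by
      have : s.val = N * (s.val / N) + m := by rw [hm]; exact (Nat.div_add_mod s.val N).symm
      rw [this]
      exact dvd_add (Dvd.dvd.mul_right hqN' _) hqm
    exact (dvd_pow_self p (by omega : j' ≠ 0)).trans hqval
  -- contradiction with generation
  have hker : ∀ s ∈ S, (ZMod.castHom hpn (ZMod p)) s = 0 := by
    intro s hs
    rw [ZMod.castHom_apply, ← ZMod.natCast_val]
    exact (ZMod.natCast_eq_zero_iff _ _).2 (hpdvd s hs)
  set ψ : ZMod n →+ ZMod p := (ZMod.castHom hpn (ZMod p)).toAddMonoidHom with hψ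
  have hsub : (S : Set (ZMod n)) ⊆ (ψ.ker : Set (ZMod n)) := by
    intro x hx
    exact hker x hx
  have hle : AddSubgroup.closure (S : Set (ZMod n)) ≤ ψ.ker :=
    (AddSubgroup.closure_le _).2 hsub
  rw [hgen] at hle
  have h1 : ψ 1 = 0 := hle (AddSubgroup.mem_top 1)
  have h2 : ψ 1 = 1 := (ZMod.castHom hpn (ZMod p)).map_one
  rw [h2] at h1
  exact one_ne_zero h1
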